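/- Let N = 2^J, let x ∈ ℝ^N have short support of length m ≤ M satisfying the non-cancellation condition, L := ⌈log₂ M⌉ + 1, and let j ∈ {L,...,J−1} with the support of x^{(j)} not contained in the last M entries of x^{(j)}. Then the vector ((x^{(j+1)})^II_{2k+1})_{k=0}^{m^{(j)}−1} of the first m^{(j)} oddly indexed DCT-II entries of x^{(j+1)} has at least one nonzero entry. -/

import Mathlib

open Matrix

/-- The cosine matrix of type II of size `n`. -/
noncomputable def CII (n : ℕ) : Matrix (Fin n) (Fin n) ℝ :=
  Matrix.of fun k l : Fin n =>
    Real.sqrt (2 / (n : ℝ)) * (if (k : ℕ) % n = 0 then 1 / Real.sqrt 2 else 1) *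
      Real.cos ((k : ℕ) * (2 * (l : ℕ) + 1) * Real.pi / (2 * (n : ℝ)))

/-- The cosine matrix of type IV of size `n`. -/
noncomputable def CIV (n : ℕ) : Matrix (Fin n) (Fin n) ℝ :=
  Matrix.of fun k l : Fin n =>
    Real.sqrt (2 / (n : ℝ)) *
      Real.cos ((2 * (k : ℕ) + 1) * (2 * (l : ℕ) + 1) * Real.pi / (4 * (n : ℝ)))

/-- One step of reflected periodization: add the first half and the reflected second half. -/
noncomputable def halfSum (n : ℕ) (x : Fin (2 * n) → ℝ) : Fin n → ℝ :=
  fun k => x ⟨(k : ℕ), by have := k.isLt; omega⟩ +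
           x ⟨2 * n - 1 - (k : ℕ), by have := k.isLt; omega⟩

/-- Iterated reflected periodization, peeling off `s` halving steps. -/
noncomputable def perAux (j : ℕ) : (s : ℕ) → (Fin (2 ^ (j + s)) → ℝ) → Fin (2 ^ j) → ℝ
  | 0, x => x
  | s + 1, x => perAux j s (halfSum (2 ^ (j + s))
      (fun k => x (Fin.cast (by
        have h1 : j + (s + 1) = (j + s) + 1 := by omega
        rw [h1, pow_succ]; ring) k)))

/-- The reflected periodization `x^{(j)}` of `x ∈ ℝ^{2^J}`. -/
noncomputable def reflPer (J j : ℕ) (h : j ≤ J) (x : Fin (2 ^ J) → ℝ) : Fin (2 ^ j) → ℝ :=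
  perAux j (J - j) (fun k => x (Fin.cast (by rw [Nat.add_sub_cancel' h]) k))

/-- `y` has short (one-block) support of length `m` with first support index `μ`. -/
structure ShortSupp {n : ℕ} (y : Fin n → ℝ) (m μ : ℕ) : Prop where
  pos : 1 ≤ m
  bdd : μ + m ≤ n
  first : ∀ k : Fin n, (k : ℕ) = μ → y k ≠ 0
  last : ∀ k : Fin n, (k : ℕ) = μ + m - 1 → y k ≠ 0
  outside : ∀ k : Fin n, ((k : ℕ) < μ ∨ μ + m ≤ (k : ℕ)) → y k = 0

/-- Non-cancellation condition: if `m` is even, the first and last support entries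
do not sum to zero. -/
def NonCancel {n : ℕ} (y : Fin n → ℝ) (m μ : ℕ) : Prop :=
  Even m → ∀ a b : Fin n, (a : ℕ) = μ → (b : ℕ) = μ + m - 1 → y a + y b ≠ 0

lemma perAux_congr (j : ℕ) {s s' : ℕ} (h : s = s') (x : Fin (2 ^ (j + s)) → ℝ)
    (x' : Fin (2 ^ (j + s')) → ℝ)
    (hx : ∀ (k : Fin (2 ^ (j + s))) (k' : Fin (2 ^ (j + s'))), (k : ℕ) = (k' : ℕ) → x k = x' k') :
    HEq (perAux j s x) (perAux j s' x') := by
  subst h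
  have : x = x' := funext fun k => hx k k rfl
  rw [this]

lemma perAux_congr' (j : ℕ) {s s' : ℕ} (h : s = s') (x : Fin (2 ^ (j + s)) → ℝ)
    (x' : Fin (2 ^ (j + s')) → ℝ)
    (hx : ∀ (k : Fin (2 ^ (j + s))) (k' : Fin (2 ^ (j + s'))), (k : ℕ) = (k' : ℕ) → x k = x' k')
    (k : Fin (2 ^ j)) : perAux j s x k = perAux j s' x' k := by
  have := perAux_congr j h x x' hx
  subst h
  rw [eq_of_heq this]

lemma perAux_bot (j s : ℕ) (x : Fin (2 ^ (j + (s + 1))) → ℝ) :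
    perAux j (s + 1) x
      = halfSum (2 ^ j) (fun k => perAux (j + 1) s
          (fun i => x (Fin.cast (by rw [show j + 1 + s = j + (s + 1) by omega]) i))
          (Fin.cast (by rw [pow_succ]; ring) k)) := by
  induction s with
  | zero =>
      simp only [perAux]
      funext k
      simp only [halfSum]
      congr 2 <;> simp
  | succ s ih =>
      show perAux j (s + 1) _ = _
      rw [ih]
      funext k
      simp only [halfSum]
      have hE : j + 1 + (s + 1) = j + (s + 1) + 1 := by omega
      congr 1
      all_goals
        apply perAux_congr' (j + 1) rfl
        intro a a' ha
        simp only [halfSum, perAux]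
        congr 1 <;> apply congrArg <;> apply Fin.ext <;>
          simp only [Fin.cast, Fin.val_mk] <;>
          (have hP : (2:ℕ) ^ (j + 1 + s) = 2 ^ (j + (s + 1)) := by congr 1; omega) <;> omega

lemma two_pow_succ' (j : ℕ) : 2 ^ (j + 1) = 2 * 2 ^ j := by rw [pow_succ]; ring

lemma reflPer_succ (J j : ℕ) (hJ : j + 1 ≤ J) (x : Fin (2 ^ J) → ℝ) (k : Fin (2 ^ j)) :
    reflPer J j (le_trans (Nat.le_succ j) hJ) x k
      = reflPer J (j + 1) hJ x ⟨(k : ℕ), by have := k.isLt; have h2 := two_pow_succ' j; omega⟩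
      + reflPer J (j + 1) hJ x ⟨2 ^ (j + 1) - 1 - (k : ℕ),
          by have := k.isLt; have h2 := two_pow_succ' j; omega⟩ := by
  unfold reflPer
  have h1 : J - j = (J - (j + 1)) + 1 := by omega
  rw [perAux_congr' j h1 _ (fun i : Fin (2 ^ (j + (J - (j + 1) + 1))) =>
        x (Fin.cast (by rw [show j + (J - (j + 1) + 1) = J from by omega]) i))
      (by intro a a' ha; congr 1; exact Fin.ext (by simpa [Fin.cast] using ha))]
  rw [perAux_bot]
  simp only [halfSum]
  have h2 := two_pow_succ' j
  have hXY : (fun i : Fin (2 ^ (j + 1 + (J - (j + 1)))) =>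
        (fun i' : Fin (2 ^ (j + (J - (j + 1) + 1))) =>
            x (Fin.cast (by rw [show j + (J - (j + 1) + 1) = J from by omega]) i'))
          (Fin.cast (by rw [show j + 1 + (J - (j + 1)) = j + (J - (j + 1) + 1) from by omega]) i))
      = (fun i : Fin (2 ^ (j + 1 + (J - (j + 1)))) =>
          x (Fin.cast (by rw [Nat.add_sub_cancel' hJ]) i)) := by
    funext i
    congr 1
  rw [hXY]
  congr 1 <;> congr 1 <;> exact Fin.ext (by simp [Fin.cast]; omega)

lemma halfSum_supp (n a b : ℕ) (hn : 0 < n) (y : Fin (2 * n) → ℝ)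
    (hy : ∀ k : Fin (2 * n), y k ≠ 0 → a ≤ (k : ℕ) ∧ (k : ℕ) ≤ b) :
    ∃ a' b', b' - a' ≤ b - a ∧ b' < n ∧
      ∀ k : Fin n, halfSum n y k ≠ 0 → a' ≤ (k : ℕ) ∧ (k : ℕ) ≤ b' := by
  rcases lt_or_ge b a with hba | hab
  · refine ⟨1, 0, by omega, hn, ?_⟩
    intro k hk
    exfalso
    apply hk
    have hz : ∀ i, y i = 0 := fun i => by
      by_contra h
      have := hy i h
      omega
    simp [halfSum, hz]
  refine ⟨if b < n then a else if n ≤ a then 2 * n - 1 - b else min a (2 * n - 1 - b),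
    if b < n then b else if n ≤ a then 2 * n - 1 - a else n - 1, ?_, ?_, ?_⟩
  · rcases lt_or_ge b n with h | h
    · simp [h]
    · rcases le_or_gt n a with h2 | h2
      · simp [Nat.not_lt.mpr h, h2]; omega
      · simp [Nat.not_lt.mpr h, Nat.not_le.mpr h2]; omega
  · split_ifs <;> omega
  · intro k hk
    have hcase : y ⟨(k : ℕ), by have := k.isLt; omega⟩ ≠ 0 ∨
        y ⟨2 * n - 1 - (k : ℕ), by have := k.isLt; omega⟩ ≠ 0 := by
      by_contra hc
      push_neg at hc
      apply hk
      simp [halfSum, hc.1, hc.2]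
    have hkl := k.isLt
    rcases hcase with h | h
    · have := hy _ h
      simp only [Fin.val_mk] at this
      split_ifs <;> omega
    · have := hy _ h
      simp only [Fin.val_mk] at this
      split_ifs <;> omega

lemma perAux_supp (j : ℕ) : ∀ (s : ℕ) (x : Fin (2 ^ (j + s)) → ℝ) (a b : ℕ),
    (∀ k : Fin (2 ^ (j + s)), x k ≠ 0 → a ≤ (k : ℕ) ∧ (k : ℕ) ≤ b) →
    ∃ a' b', b' - a' ≤ b - a ∧ b' < 2 ^ j ∧
      ∀ k : Fin (2 ^ j), perAux j s x k ≠ 0 → a' ≤ (k : ℕ) ∧ (k : ℕ) ≤ b'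
  | 0, x, a, b, hx => by
      refine ⟨min a (2 ^ j - 1), min b (2 ^ j - 1), by omega, by
        have := Nat.one_le_two_pow (n := j); omega, ?_⟩
      intro k hk
      have := hx k hk
      have := k.isLt
      omega
  | s + 1, x, a, b, hx => by
      obtain ⟨a', b', h1, h2, h3⟩ := halfSum_supp (2 ^ (j + s)) a b (Nat.pow_pos (by norm_num))
        (fun k => x (Fin.cast (by rw [show j + (s + 1) = (j + s) + 1 from by omega, pow_succ]; ring) k))
        (fun k hk => hx _ hk)
      obtain ⟨a'', b'', g1, g2, g3⟩ := perAux_supp j s _ a' b' h3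
      exact ⟨a'', b'', by omega, g2, fun k hk => g3 k hk⟩

lemma cos_reflect (k l n : ℕ) (hl : l < 2 * n) (hn : 0 < n) :
    Real.cos ((2 * (k:ℝ) + 1) * (2 * ((2 * n - 1 - l : ℕ) : ℝ) + 1) * Real.pi / (4 * n))
      = - Real.cos ((2 * (k:ℝ) + 1) * (2 * (l:ℝ) + 1) * Real.pi / (4 * n)) := by
  have hcast : ((2 * n - 1 - l : ℕ) : ℝ) = 2 * n - 1 - l := by
    rw [Nat.cast_sub (by omega), Nat.cast_sub (by omega)]
    push_cast; ring
  rw [hcast]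
  have hne : (n : ℝ) ≠ 0 := Nat.cast_ne_zero.mpr (by omega)
  have harg : (2 * (k:ℝ) + 1) * (2 * (2 * n - 1 - l) + 1) * Real.pi / (4 * n)
      = (Real.pi - (2 * (k:ℝ) + 1) * (2 * l + 1) * Real.pi / (4 * n)) + k * (2 * Real.pi) := by
    field_simp
    ring
  rw [harg, Real.cos_add_nat_mul_two_pi, Real.cos_pi_sub]

lemma two_cos_pow (θ : ℝ) (n : ℕ) :
    (2 * Real.cos θ) ^ n
      = ∑ r ∈ Finset.range (n + 1), (n.choose r : ℝ) * Real.cos ((2 * (r:ℝ) - n) * θ) := by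
  have key : ((2 * Real.cos θ : ℝ) : ℂ) ^ n
      = ∑ r ∈ Finset.range (n + 1),
          ((n.choose r : ℝ) : ℂ) * Complex.exp ((((2 * (r:ℝ) - n) * θ : ℝ)) * Complex.I) := by
    have h1 : ((2 * Real.cos θ : ℝ) : ℂ)
        = Complex.exp ((θ:ℂ) * Complex.I) + Complex.exp (-(θ:ℂ) * Complex.I) := by
      push_cast
      rw [← Complex.two_cos]
    rw [h1, add_pow]
    apply Finset.sum_congr rfl
    intro r hr
    have hrn : r ≤ n := by simp at hr; omega
    rw [← Complex.exp_nat_mul, ← Complex.exp_nat_mul, ← Complex.exp_add]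
    have h2 : (r : ℂ) * ((θ:ℂ) * Complex.I) + (n - r : ℕ) * (-(θ:ℂ) * Complex.I)
        = (((2 * (r:ℝ) - n) * θ : ℝ)) * Complex.I := by
      rw [Nat.cast_sub hrn]
      push_cast
      ring
    rw [h2]
    push_cast
    ring
  have h3 := congrArg Complex.re key
  rw [← Complex.ofReal_pow] at h3
  rw [Complex.ofReal_re, Complex.re_sum] at h3
  rw [h3]
  apply Finset.sum_congr rfl
  intro r _
  rw [Complex.re_ofReal_mul, Complex.exp_ofReal_mul_I_re]

lemma vanish_of_cos_eqs (mj : ℕ) (a θ : Fin mj → ℝ)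
    (hθmono : StrictMono θ) (hθ0 : ∀ t, 0 < θ t) (hθ1 : ∀ t, θ t < Real.pi / 2)
    (H : ∀ i : ℕ, i < mj → ∑ t, a t * Real.cos ((2 * (i:ℝ) + 1) * θ t) = 0) :
    ∀ t, a t = 0 := by
  set c : Fin mj → ℝ := fun t => Real.cos (θ t) with hc
  have hπ := Real.pi_pos
  have hcpos : ∀ t, 0 < c t := fun t =>
    Real.cos_pos_of_mem_Ioo ⟨by have := hθ0 t; linarith, hθ1 t⟩
  have hcanti : ∀ s t : Fin mj, s < t → c t < c s := by
    intro s t hst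
    apply Real.strictAntiOn_cos
    · exact ⟨le_of_lt (hθ0 s), by have := hθ1 s; linarith⟩
    · exact ⟨le_of_lt (hθ0 t), by have := hθ1 t; linarith⟩
    · exact hθmono hst
  set d : Fin mj → ℝ := fun t => c t ^ 2 with hd
  have hdinj : Function.Injective d := by
    intro s t hst
    by_contra hne
    rcases lt_or_gt_of_ne hne with h | h
    · have h2 := hcanti s t h
      have := pow_lt_pow_left₀ h2 (le_of_lt (hcpos t)) (by norm_num : 2 ≠ 0)
      simp only [hd] at hst
      linarith
    · have h2 := hcanti t s h
      have := pow_lt_pow_left₀ h2 (le_of_lt (hcpos s)) (by norm_num : 2 ≠ 0)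
      simp only [hd] at hst
      linarith
  have Hpow : ∀ i : ℕ, i < mj → ∑ t, a t * (c t * d t ^ i) = 0 := by
    intro i hi
    have hid : ∀ t, 2 ^ (2 * i + 1) * (a t * (c t * d t ^ i)) = a t * (2 * c t) ^ (2 * i + 1) := by
      intro t
      rw [hd]
      rw [mul_pow, ← pow_mul]
      ring
    have hsum : ∑ t, a t * (2 * c t) ^ (2 * i + 1) = 0 := by
      have : ∀ t : Fin mj, a t * (2 * c t) ^ (2 * i + 1)
          = ∑ r ∈ Finset.range (2 * i + 2),
              (Nat.choose (2 * i + 1) r : ℝ) * (a t * Real.cos ((2 * (r:ℝ) - (2 * i + 1)) * θ t)) := by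
        intro t
        rw [two_cos_pow, Finset.mul_sum]
        apply Finset.sum_congr rfl
        intro r _
        push_cast
        ring
      rw [Finset.sum_congr rfl (fun t _ => this t), Finset.sum_comm]
      apply Finset.sum_eq_zero
      intro r hr
      rw [← Finset.mul_sum]
      have hr2 : r < 2 * i + 2 := Finset.mem_range.mp hr
      rcases le_or_gt r i with hri | hri
      · have hval : ∀ t : Fin mj, Real.cos ((2 * (r:ℝ) - (2 * i + 1)) * θ t)
            = Real.cos ((2 * ((i - r : ℕ):ℝ) + 1) * θ t) := by
          intro t
          have : (2 * (r:ℝ) - (2 * i + 1)) = -((2 * ((i - r : ℕ):ℝ) + 1)) := by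
            rw [Nat.cast_sub hri]; push_cast; ring
          rw [this, neg_mul, Real.cos_neg]
        rw [Finset.sum_congr rfl (fun t _ => by rw [hval t])]
        rw [H (i - r) (by omega), mul_zero]
      · have hval : ∀ t : Fin mj, Real.cos ((2 * (r:ℝ) - (2 * i + 1)) * θ t)
            = Real.cos ((2 * ((r - i - 1 : ℕ):ℝ) + 1) * θ t) := by
          intro t
          have : (2 * (r:ℝ) - (2 * i + 1)) = 2 * ((r - i - 1 : ℕ):ℝ) + 1 := by
            rw [Nat.cast_sub (by omega), Nat.cast_sub (by omega)]; push_cast; ring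
          rw [this]
        rw [Finset.sum_congr rfl (fun t _ => by rw [hval t])]
        rw [H (r - i - 1) (by omega), mul_zero]
    have h2 : (2:ℝ) ^ (2 * i + 1) * ∑ t, a t * (c t * d t ^ i) = 0 := by
      rw [Finset.mul_sum]
      rw [Finset.sum_congr rfl (fun t _ => hid t)]
      exact hsum
    have h3 : (2:ℝ) ^ (2 * i + 1) ≠ 0 := by positivity
    exact (mul_eq_zero.mp h2).resolve_left h3
  -- Vandermonde
  have hdet : ((Matrix.vandermonde d)ᵀ).det ≠ 0 := by
    rw [Matrix.det_transpose]
    exact Matrix.det_vandermonde_ne_zero_iff.mpr hdinj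
  have hmul : ((Matrix.vandermonde d)ᵀ).mulVec (fun t => a t * c t) = 0 := by
    funext i
    simp only [Matrix.mulVec, dotProduct, Matrix.transpose_apply, Matrix.vandermonde,
      Matrix.of_apply, Pi.zero_apply]
    rw [← Hpow (i : ℕ) i.isLt]
    exact Finset.sum_congr rfl fun t _ => by ring
  have hzero := Matrix.eq_zero_of_mulVec_eq_zero hdet hmul
  intro t
  have := congrFun hzero t
  simp only [Pi.zero_apply] at this
  rcases mul_eq_zero.mp this with h | h
  · exact h
  · exact absurd h (ne_of_gt (hcpos t))

lemma sum_split_reflect (n : ℕ) (f : Fin (2 * n) → ℝ) :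
    ∑ l, f l = ∑ l : Fin n, (f ⟨(l:ℕ), by have := l.isLt; omega⟩
      + f ⟨2 * n - 1 - (l:ℕ), by have := l.isLt; omega⟩) := by
  have h2 : 2 * n = n + n := by ring
  rw [Finset.sum_add_distrib]
  rw [show (∑ l, f l) = ∑ l : Fin (n + n), f (Fin.cast h2.symm l) from
    (Fin.sum_congr' _ h2.symm).symm]
  rw [Fin.sum_univ_add]
  set g : ℕ → ℝ := fun i => if h : i < n then f ⟨n + i, by omega⟩ else 0 with hg
  refine congrArg₂ (· + ·) ?_ ?_
  · apply Finset.sum_congr rfl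
    intro l _
    congr 1
  · have e1 : ∀ l : Fin n, f (Fin.cast h2.symm (Fin.natAdd n l)) = g (l : ℕ) := by
      intro l
      simp only [hg]
      rw [dif_pos l.isLt]
      congr 1
    have e2 : ∀ l : Fin n, f ⟨2 * n - 1 - (l:ℕ), by have := l.isLt; omega⟩ = g (n - 1 - (l:ℕ)) := by
      intro l
      have hl := l.isLt
      simp only [hg]
      rw [dif_pos (by omega : n - 1 - (l:ℕ) < n)]
      congr 1
      apply Fin.ext
      simp only [Fin.val_mk]
      omega
    rw [Finset.sum_congr rfl (fun l _ => e1 l), Finset.sum_congr rfl (fun l _ => e2 l)]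
    rw [Fin.sum_univ_eq_sum_range g n, Fin.sum_univ_eq_sum_range (fun i => g (n - 1 - i)) n]
    exact (Finset.sum_range_reflect g n).symm

lemma sum_window (n mj μj : ℕ) (hbdd : μj + mj ≤ n) (f : Fin n → ℝ)
    (hf : ∀ l : Fin n, ((l:ℕ) < μj ∨ μj + mj ≤ (l:ℕ)) → f l = 0) :
    ∑ l, f l = ∑ t : Fin mj, f ⟨μj + (t:ℕ), by have := t.isLt; omega⟩ := by
  set g : ℕ → ℝ := fun i => if h : i < n then f ⟨i, h⟩ else 0 with hg
  have e1 : ∀ l : Fin n, f l = g (l : ℕ) := by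
    intro l
    simp only [hg]
    rw [dif_pos l.isLt]
  rw [Finset.sum_congr rfl (fun l _ => e1 l)]
  rw [Fin.sum_univ_eq_sum_range g n]
  have key : ∑ i ∈ Finset.range n, g i = ∑ i ∈ Finset.Ico μj (μj + mj), g i := by
    symm
    apply Finset.sum_subset
    · intro i hi
      simp only [Finset.mem_Ico] at hi
      simp only [Finset.mem_range]
      omega
    · intro i hi hni
      simp only [Finset.mem_range] at hi
      simp only [Finset.mem_Ico, not_and, not_lt] at hni
      simp only [hg]
      rw [dif_pos hi]
      apply hf
      simp only [Fin.val_mk]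
      omega
  rw [key, Finset.sum_Ico_eq_sum_range]
  simp only [Nat.add_sub_cancel_left]
  rw [← Fin.sum_univ_eq_sum_range (fun i => g (μj + i)) mj]
  apply Finset.sum_congr rfl
  intro t _
  simp only [hg]
  rw [dif_pos (by have := t.isLt; omega : μj + (t:ℕ) < n)]

lemma dct_odd_formula (j : ℕ) (y : Fin (2 ^ (j + 1)) → ℝ) (i : ℕ)
    (hi : 2 * i + 1 < 2 ^ (j + 1)) (pf : 2 * i + 1 < 2 ^ (j + 1)) :
    (CII (2 ^ (j + 1))).mulVec y ⟨2 * i + 1, pf⟩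
      = Real.sqrt (2 / ((2 ^ (j + 1) : ℕ) : ℝ)) * ∑ l : Fin (2 ^ j),
          (y ⟨(l : ℕ), by have := l.isLt; have h2 := two_pow_succ' j; omega⟩
            - y ⟨2 * 2 ^ j - 1 - (l : ℕ), by have := l.isLt; have h2 := two_pow_succ' j; omega⟩)
            * Real.cos ((2 * (i : ℝ) + 1)
                * ((2 * ((l : ℕ) : ℝ) + 1) * Real.pi / (4 * ((2 ^ j : ℕ) : ℝ)))) := by
  have h2 := two_pow_succ' j
  have hn : 0 < 2 ^ j := Nat.pow_pos (by norm_num)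
  have hnr : (0:ℝ) < ((2 ^ j : ℕ) : ℝ) := by positivity
  have hdenom : 2 * (((2 ^ (j + 1) : ℕ)) : ℝ) = 4 * ((2 ^ j : ℕ) : ℝ) := by
    rw [h2]; push_cast; ring
  have step1 : (CII (2 ^ (j + 1))).mulVec y ⟨2 * i + 1, pf⟩
      = Real.sqrt (2 / ((2 ^ (j + 1) : ℕ) : ℝ)) * ∑ l : Fin (2 ^ (j + 1)),
          Real.cos ((2 * (i : ℝ) + 1)
            * ((2 * ((l : ℕ) : ℝ) + 1) * Real.pi / (4 * ((2 ^ j : ℕ) : ℝ)))) * y l := by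
    simp only [CII, Matrix.mulVec, dotProduct, Matrix.of_apply, Fin.val_mk]
    rw [Finset.mul_sum]
    apply Finset.sum_congr rfl
    intro l _
    rw [Nat.mod_eq_of_lt hi, if_neg (by omega), mul_one]
    have harg : ((2 * i + 1 : ℕ) : ℝ) * (2 * ((l : ℕ) : ℝ) + 1) * Real.pi
          / (2 * (((2 ^ (j + 1) : ℕ)) : ℝ))
        = (2 * (i : ℝ) + 1) * ((2 * ((l : ℕ) : ℝ) + 1) * Real.pi / (4 * ((2 ^ j : ℕ) : ℝ))) := by
      rw [hdenom]
      push_cast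
      ring
    rw [← harg]
    push_cast
    ring
  rw [step1]
  congr 1
  have step2 : ∑ l : Fin (2 ^ (j + 1)),
      Real.cos ((2 * (i : ℝ) + 1)
        * ((2 * ((l : ℕ) : ℝ) + 1) * Real.pi / (4 * ((2 ^ j : ℕ) : ℝ)))) * y l
    = ∑ l : Fin (2 * 2 ^ j),
        Real.cos ((2 * (i : ℝ) + 1)
          * ((2 * (((Fin.cast h2.symm l : Fin (2 ^ (j+1))) : ℕ) : ℝ) + 1) * Real.pi
            / (4 * ((2 ^ j : ℕ) : ℝ)))) * y (Fin.cast h2.symm l) :=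
    (Fin.sum_congr' _ h2.symm).symm
  rw [step2, sum_split_reflect (2 ^ j)]
  apply Finset.sum_congr rfl
  intro l _
  have hl := l.isLt
  have hA : ∀ (v : ℕ) (p : v < 2 * 2 ^ j),
      y (Fin.cast h2.symm ⟨v, p⟩) = y ⟨v, by omega⟩ := by
    intro v p
    congr 1
  have hval : ∀ (v : ℕ) (p : v < 2 * 2 ^ j),
      (((Fin.cast h2.symm (⟨v, p⟩ : Fin (2 * 2 ^ j)) : Fin (2 ^ (j+1))) : ℕ) : ℝ) = (v : ℝ) := by
    intro v p
    norm_cast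
  rw [hA, hA, hval, hval]
  have hrefl : Real.cos ((2 * (i : ℝ) + 1)
        * ((2 * ((2 * 2 ^ j - 1 - (l : ℕ) : ℕ) : ℝ) + 1) * Real.pi / (4 * ((2 ^ j : ℕ) : ℝ))))
      = - Real.cos ((2 * (i : ℝ) + 1)
        * ((2 * ((l : ℕ) : ℝ) + 1) * Real.pi / (4 * ((2 ^ j : ℕ) : ℝ)))) := by
    have := cos_reflect i (l : ℕ) (2 ^ j) (by omega) hn
    rw [show (2 * (i : ℝ) + 1)
          * ((2 * ((2 * 2 ^ j - 1 - (l : ℕ) : ℕ) : ℝ) + 1) * Real.pi / (4 * ((2 ^ j : ℕ) : ℝ)))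
        = (2 * (i:ℝ) + 1) * (2 * ((2 * 2 ^ j - 1 - (l : ℕ) : ℕ) : ℝ) + 1) * Real.pi
          / (4 * ((2 ^ j : ℕ) : ℝ)) from by push_cast; ring]
    rw [show (2 * (i : ℝ) + 1)
          * ((2 * ((l : ℕ) : ℝ) + 1) * Real.pi / (4 * ((2 ^ j : ℕ) : ℝ)))
        = (2 * (i:ℝ) + 1) * (2 * ((l : ℕ) : ℝ) + 1) * Real.pi
          / (4 * ((2 ^ j : ℕ) : ℝ)) from by push_cast; ring]
    convert this using 4 <;> push_cast <;> ring
  rw [hrefl]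
  ring

theorem exists_nonzero_odd_entry (J m M μ : ℕ) (x : Fin (2 ^ J) → ℝ)
    (hmM : m ≤ M) (hs : ShortSupp x m μ) (hnc : NonCancel x m μ)
    (j : ℕ) (hL : Nat.clog 2 M + 1 ≤ j) (hJ : j + 1 ≤ J)
    (hnotlast : ∃ k : Fin (2 ^ j), (k : ℕ) < 2 ^ j - M ∧
        reflPer J j (le_trans (Nat.le_succ j) hJ) x k ≠ 0)
    (mj μj : ℕ)
    (hsj : ShortSupp (reflPer J j (le_trans (Nat.le_succ j) hJ) x) mj μj) :
    ∃ k : Fin (2 ^ j), (k : ℕ) < mj ∧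
      (CII (2 ^ (j + 1))).mulVec (reflPer J (j + 1) hJ x)
          ⟨2 * (k : ℕ) + 1, by
            have hk := k.isLt
            have h2 : 2 ^ (j + 1) = 2 * 2 ^ j := by rw [pow_succ]; ring
            omega⟩ ≠ 0 := by
  classical
  have h2 : 2 ^ (j + 1) = 2 * 2 ^ j := two_pow_succ' j
  have hn : 0 < 2 ^ j := Nat.pow_pos (by norm_num)
  have hM1 : 1 ≤ M := le_trans hs.pos hmM
  set y := reflPer J (j + 1) hJ x with hy
  set xj := reflPer J j (le_trans (Nat.le_succ j) hJ) x with hxj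
  have hyext : ∀ (v v' : ℕ) (p : v < 2 ^ (j + 1)) (p' : v' < 2 ^ (j + 1)),
      v = v' → y ⟨v, p⟩ = y ⟨v', p'⟩ := by
    intro v v' p p' hv
    exact congrArg y (Fin.ext hv)
  -- support interval for y
  obtain ⟨a, b, hba, hblt, h3⟩ := perAux_supp (j + 1) (J - (j + 1))
      (fun k : Fin (2 ^ ((j + 1) + (J - (j + 1)))) =>
        x (Fin.cast (by rw [Nat.add_sub_cancel' hJ]) k)) μ (μ + m - 1)
      (by
        intro k hk
        by_contra hc
        apply hk
        apply hs.outside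
        have hm1 := hs.pos
        simp only [Fin.cast, Fin.val_mk]
        omega)
  have hysupp : ∀ k : Fin (2 ^ (j + 1)), y k ≠ 0 → a ≤ (k : ℕ) ∧ (k : ℕ) ≤ b :=
    fun k hk => h3 k hk
  have hfold : ∀ l : Fin (2 ^ j), xj l
      = y ⟨(l : ℕ), by have := l.isLt; omega⟩
      + y ⟨2 * 2 ^ j - 1 - (l : ℕ), by have := l.isLt; omega⟩ := by
    intro l
    rw [hxj, reflPer_succ J j hJ x l, ← hy]
    congr 1
    exact hyext _ _ _ _ (by omega)
  have hm1 := hs.pos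
  -- the support interval of y lies in one half
  have hhalf : b < 2 ^ j ∨ 2 ^ j ≤ a := by
    by_contra hc
    push_neg at hc
    obtain ⟨hcb, hca⟩ := hc
    obtain ⟨k0, hk0M, hk0ne⟩ := hnotlast
    have hk0lt := k0.isLt
    have hone : y ⟨(k0 : ℕ), by omega⟩ ≠ 0 ∨ y ⟨2 * 2 ^ j - 1 - (k0 : ℕ), by omega⟩ ≠ 0 := by
      by_contra hcc
      push_neg at hcc
      apply hk0ne
      rw [hfold k0, hcc.1, hcc.2, add_zero]
    rcases hone with h | h
    · have := hysupp _ h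
      simp only [Fin.val_mk] at this
      omega
    · have := hysupp _ h
      simp only [Fin.val_mk] at this
      omega
  -- the difference vector u
  set u : Fin (2 ^ j) → ℝ := fun l =>
    y ⟨(l : ℕ), by have := l.isLt; omega⟩
    - y ⟨2 * 2 ^ j - 1 - (l : ℕ), by have := l.isLt; omega⟩ with hu
  have hcase : (∀ l : Fin (2 ^ j), u l = xj l) ∨ (∀ l : Fin (2 ^ j), u l = -xj l) := by
    rcases hhalf with hb | ha
    · left
      intro l
      have hlt := l.isLt
      have hz : y ⟨2 * 2 ^ j - 1 - (l : ℕ), by omega⟩ = 0 := by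
        by_contra hcc
        have := hysupp _ hcc
        simp only [Fin.val_mk] at this
        omega
      rw [hu, hfold l]
      simp only
      rw [hz, sub_zero, add_zero]
    · right
      intro l
      have hlt := l.isLt
      have hz : y ⟨(l : ℕ), by omega⟩ = 0 := by
        by_contra hcc
        have := hysupp _ hcc
        simp only [Fin.val_mk] at this
        omega
      rw [hu, hfold l]
      simp only
      rw [hz, zero_sub, zero_add]
  have hmj1 : 1 ≤ mj := hsj.pos
  have hmj2 : μj + mj ≤ 2 ^ j := hsj.bdd
  have husupp : ∀ l : Fin (2 ^ j), ((l : ℕ) < μj ∨ μj + mj ≤ (l : ℕ)) → u l = 0 := by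
    intro l hl
    rcases hcase with h | h
    · rw [h l, hsj.outside l hl]
    · rw [h l, hsj.outside l hl, neg_zero]
  have hufirst : u ⟨μj, by omega⟩ ≠ 0 := by
    have hfirst := hsj.first ⟨μj, by omega⟩ rfl
    rcases hcase with h | h
    · rw [h]; exact hfirst
    · rw [h]; exact neg_ne_zero.mpr hfirst
  -- contradiction setup
  by_contra hcon
  push_neg at hcon
  have hsqrt : Real.sqrt (2 / ((2 ^ (j + 1) : ℕ) : ℝ)) ≠ 0 := by
    have : (0:ℝ) < 2 / ((2 ^ (j + 1) : ℕ) : ℝ) := by positivity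
    exact ne_of_gt (Real.sqrt_pos.mpr this)
  have key : ∀ i : ℕ, i < mj → ∑ t : Fin mj,
      (u ⟨μj + (t : ℕ), by have := t.isLt; omega⟩)
        * Real.cos ((2 * (i : ℝ) + 1)
            * ((2 * ((μj + (t : ℕ) : ℕ) : ℝ) + 1) * Real.pi / (4 * ((2 ^ j : ℕ) : ℝ)))) = 0 := by
    intro i hi
    have hilt : i < 2 ^ j := by omega
    have hzero : (CII (2 ^ (j + 1))).mulVec y ⟨2 * i + 1, by omega⟩ = 0 := by
      have := hcon ⟨i, hilt⟩ (by simpa using hi)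
      exact this
    rw [dct_odd_formula j y i (by omega) (by omega)] at hzero
    have hwin := sum_window (2 ^ j) mj μj hmj2
        (fun l : Fin (2 ^ j) => u l
          * Real.cos ((2 * (i : ℝ) + 1)
              * ((2 * ((l : ℕ) : ℝ) + 1) * Real.pi / (4 * ((2 ^ j : ℕ) : ℝ)))))
        (by
          intro l hl
          rw [husupp l hl, zero_mul])
    have huform : ∑ l : Fin (2 ^ j),
        (y ⟨(l : ℕ), by have := l.isLt; omega⟩
          - y ⟨2 * 2 ^ j - 1 - (l : ℕ), by have := l.isLt; omega⟩)
          * Real.cos ((2 * (i : ℝ) + 1)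
              * ((2 * ((l : ℕ) : ℝ) + 1) * Real.pi / (4 * ((2 ^ j : ℕ) : ℝ))))
        = ∑ l : Fin (2 ^ j), u l
          * Real.cos ((2 * (i : ℝ) + 1)
              * ((2 * ((l : ℕ) : ℝ) + 1) * Real.pi / (4 * ((2 ^ j : ℕ) : ℝ)))) := by
      apply Finset.sum_congr rfl
      intro l _
      rw [hu]
    rw [huform, hwin] at hzero
    rcases mul_eq_zero.mp hzero with h | h
    · exact absurd h hsqrt
    · exact h
  -- apply the Vandermonde/Chebyshev argument
  have hvan := vanish_of_cos_eqs mj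
      (fun t : Fin mj => u ⟨μj + (t : ℕ), by have := t.isLt; omega⟩)
      (fun t : Fin mj => (2 * ((μj + (t : ℕ) : ℕ) : ℝ) + 1) * Real.pi / (4 * ((2 ^ j : ℕ) : ℝ)))
      (by
        intro s t hst
        have hst2 : (s : ℕ) < (t : ℕ) := hst
        have hc : ((μj + (s : ℕ) : ℕ) : ℝ) < ((μj + (t : ℕ) : ℕ) : ℝ) := by
          exact_mod_cast (by omega : μj + (s : ℕ) < μj + (t : ℕ))
        have hpi := Real.pi_pos
        have hpow : (0:ℝ) < ((2 ^ j : ℕ) : ℝ) := by positivity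
        have h4 : (0:ℝ) < 4 * ((2 ^ j : ℕ) : ℝ) := by positivity
        apply div_lt_div_of_pos_right ?_ h4
        nlinarith)
      (by
        intro t
        have hpi := Real.pi_pos
        positivity)
      (by
        intro t
        have hpi := Real.pi_pos
        have ht := t.isLt
        have hnum : ((μj + (t : ℕ) : ℕ) : ℝ) + 1 ≤ ((2 ^ j : ℕ) : ℝ) := by
          exact_mod_cast (by omega : μj + (t : ℕ) + 1 ≤ 2 ^ j)
        have hpow : (0:ℝ) < ((2 ^ j : ℕ) : ℝ) := by positivity
        rw [div_lt_div_iff₀ (by positivity) (by norm_num : (0:ℝ) < 2)]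
        nlinarith)
      key
  have := hvan ⟨0, hmj1⟩
  simp only [Fin.val_mk, Nat.add_zero] at this
  exact hufirst this
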